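/- Let E be an uncountable Polish space, F a compact metric space, and g : E† → F continuous with g(x, y) = g(y, x) for all x ≠ y. Then there is a Cantor set Q ⊆ E such that the restriction of g to Q† extends to a continuous function ĝ : Q × Q → F. -/

import Mathlib

open Metric Set Filter Topology
open scoped Classical

namespace Stmt8Aux

variable {E F : Type*} [MetricSpace E] [MetricSpace F]

def pairSet (P : Set E) (x : E) (δ : ℝ) : Set (E × E) :=
  {q | q.1 ∈ P ∧ q.2 ∈ P ∧ q.1 ≠ q.2 ∧ dist q.1 x < δ ∧ dist q.2 x < δ}

def K (g : E × E → F) (P : Set E) (x : E) : Set F :=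
  ⋂ (δ : ℝ) (_ : 0 < δ), closure (g '' pairSet P x δ)

variable {g : E × E → F} {P : Set E}

lemma mem_K_iff {x : E} {b : F} :
    b ∈ K g P x ↔ ∀ δ : ℝ, 0 < δ → b ∈ closure (g '' pairSet P x δ) := by
  simp [K, mem_iInter]

lemma pairSet_shift {x y : E} {δ δ' : ℝ} (h : dist y x + δ ≤ δ') :
    pairSet P y δ ⊆ pairSet P x δ' := by
  rintro ⟨u, v⟩ ⟨hu, hv, huv, h1, h2⟩
  refine ⟨hu, hv, huv, ?_, ?_⟩
  · calc dist u x ≤ dist u y + dist y x := dist_triangle _ _ _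
      _ < δ + dist y x := by linarith
      _ ≤ δ' := by linarith
  · calc dist v x ≤ dist v y + dist y x := dist_triangle _ _ _
      _ < δ + dist y x := by linarith
      _ ≤ δ' := by linarith

lemma K_subset_closure {x y : E} {δ δ' : ℝ} (hδ : 0 < δ) (h : dist y x + δ ≤ δ') :
    K g P y ⊆ closure (g '' pairSet P x δ') := fun b hb =>
  closure_mono (image_mono (pairSet_shift h)) (mem_K_iff.mp hb δ hδ)

lemma pairSet_nonempty (hP : Perfect P) {x : E} (hx : x ∈ P) {δ : ℝ} (hδ : 0 < δ) :
    (pairSet P x δ).Nonempty := by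
  have := hP.acc x hx
  rw [accPt_iff_nhds] at this
  obtain ⟨y, ⟨hy1, hy2⟩, hy3⟩ := this (ball x δ) (ball_mem_nhds x hδ)
  exact ⟨(y, x), hy2, hx, hy3, by simpa [dist_comm] using hy1, by simp [hδ]⟩

lemma K_nonempty [CompactSpace F] (hP : Perfect P) {x : E} (hx : x ∈ P) :
    (K g P x).Nonempty := by
  have : K g P x = ⋂ d : {δ : ℝ // 0 < δ}, closure (g '' pairSet P x d.1) := by
    ext b; simp [mem_K_iff, Subtype.forall]
  rw [this]
  apply IsCompact.nonempty_iInter_of_directed_nonempty_isCompact_isClosed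
  · rintro ⟨δ1, h1⟩ ⟨δ2, h2⟩
    refine ⟨⟨min δ1 δ2, lt_min h1 h2⟩, ?_, ?_⟩ <;>
      exact closure_mono (image_mono (pairSet_shift (by simp [min_le_left, min_le_right])))
  · rintro ⟨δ, hδ⟩
    exact ((pairSet_nonempty hP hx hδ).image g).closure
  · exact fun _ => isClosed_closure.isCompact
  · exact fun _ => isClosed_closure

lemma K_limit [CompactSpace F] {y : E} {b : F} {yk : ℕ → E} {bk : ℕ → F}
    (hy : Tendsto yk atTop (𝓝 y)) (hb : Tendsto bk atTop (𝓝 b))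
    (hbk : ∀ k, bk k ∈ K g P (yk k)) : b ∈ K g P y := by
  rw [mem_K_iff]
  intro δ hδ
  have hev : ∀ᶠ k in atTop, bk k ∈ closure (g '' pairSet P y δ) := by
    have : ∀ᶠ k in atTop, dist (yk k) y < δ / 2 := by
      have := Metric.tendsto_nhds.mp hy (δ / 2) (by linarith)
      exact this
    filter_upwards [this] with k hk
    exact K_subset_closure (by linarith : (0:ℝ) < δ/2) (by linarith) (hbk k)
  exact isClosed_closure.mem_of_tendsto hb hev

section Baire

variable (g P)

def S (u : F) (q : ℝ) : Set E := {y | y ∈ P ∧ ∃ b ∈ K g P y, dist u b ≤ q}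

def DD (u : F) (q : ℝ) : Set E := S g P u q ∩ closure (P \ S g P u (2 * q))

def GSet (useq : ℕ → F) : Set E :=
  P ∩ ⋂ (j : ℕ), ⋂ (m : ℕ), (DD g P (useq j) (1 / ((m : ℝ) + 1)))ᶜ

variable {g P}

lemma S_isClosed [CompactSpace F] (hP : IsClosed P) (u : F) (q : ℝ) :
    IsClosed (S g P u q) := by
  rw [← closure_subset_iff_isClosed]
  intro y hy
  obtain ⟨yk, hyk, hylim⟩ := mem_closure_iff_seq_limit.mp hy
  choose hykP bk hbk hbkd using hyk
  obtain ⟨b, -, ψ, hψ, hblim⟩ := isCompact_univ.tendsto_subseq (x := bk) (fun n => mem_univ _)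
  refine ⟨hP.mem_of_tendsto hylim (Eventually.of_forall hykP), b,
    K_limit (hylim.comp hψ.tendsto_atTop) hblim (fun k => hbk (ψ k)), ?_⟩
  have : Tendsto (fun k => dist u (bk (ψ k))) atTop (𝓝 (dist u b)) :=
    (continuous_const.dist continuous_id).continuousAt.tendsto.comp hblim
  exact le_of_tendsto this (Eventually.of_forall fun k => hbkd (ψ k))

lemma GSet_subset (useq : ℕ → F) : GSet g P useq ⊆ P := inter_subset_left

lemma GSet_dense [CompactSpace F] [CompleteSpace E] (hP : IsClosed P) (useq : ℕ → F) :
    ∀ x ∈ P, ∀ δ > 0, ∃ y ∈ GSet g P useq, dist y x < δ := by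
  haveI : CompleteSpace P := hP.completeSpace_coe
  set O : ℕ × ℕ → Set P := fun jm =>
    Subtype.val ⁻¹' (DD g P (useq jm.1) (1 / ((jm.2 : ℝ) + 1)))ᶜ with hO
  have hopen : ∀ jm, IsOpen (O jm) := by
    intro jm
    apply IsOpen.preimage continuous_subtype_val
    exact ((S_isClosed hP _ _).inter isClosed_closure).isOpen_compl
  have hdense : ∀ jm, Dense (O jm) := by
    intro ⟨j, m⟩
    rw [Metric.dense_iff]
    intro p δ hδ
    by_contra hcon
    rw [not_nonempty_iff_eq_empty] at hcon
    have hall : ∀ y ∈ P, dist y (p : E) < δ →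
        y ∈ DD g P (useq j) (1 / ((m : ℝ) + 1)) := by
      intro y hy hyd
      by_contra hnot
      have : (⟨y, hy⟩ : P) ∈ ball p δ ∩ O (j, m) := by
        constructor
        · rwa [mem_ball, Subtype.dist_eq]
        · exact hnot
      rw [hcon] at this; exact this
    have hpD : (p : E) ∈ DD g P (useq j) (1 / ((m : ℝ) + 1)) :=
      hall p p.2 (by simpa using hδ)
    obtain ⟨z, hz, hzd⟩ := Metric.mem_closure_iff.mp hpD.2 δ hδ
    have hzD := hall z hz.1 (by rwa [dist_comm])
    obtain ⟨-, b, hb, hbd⟩ := hzD.1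
    have hq : (0:ℝ) < 1 / ((m : ℝ) + 1) := by positivity
    exact hz.2 ⟨hz.1, b, hb, by linarith⟩
  have := dense_iInter_of_isOpen hopen hdense
  intro x hx δ hδ
  obtain ⟨y, hy1, hy2⟩ := (Metric.dense_iff.mp this) ⟨x, hx⟩ δ hδ
  rw [mem_ball, Subtype.dist_eq] at hy1
  refine ⟨y, ⟨y.2, ?_⟩, hy1⟩
  simp only [mem_iInter, mem_compl_iff]
  intro j m
  have := mem_iInter.mp hy2 (j, m)
  exact this

lemma GSet_stable [CompactSpace F] {useq : ℕ → F} (hu : DenseRange useq)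
    {x : E} (hx : x ∈ GSet g P useq) {b : F} (hb : b ∈ K g P x) {ε : ℝ} (hε : 0 < ε) :
    ∃ δ > 0, ∀ y ∈ P, dist y x < δ → ∃ b' ∈ K g P y, dist b' b < ε := by
  by_contra hcon
  push_neg at hcon
  obtain ⟨m, hm⟩ := exists_nat_one_div_lt (show (0:ℝ) < ε/4 by linarith)
  set q : ℝ := 1 / ((m : ℝ) + 1) with hqdef
  have hq : 0 < q := by positivity
  have hq4 : 4 * q < ε := by rw [hqdef]; push_cast at hm ⊢; linarith
  obtain ⟨j, hj⟩ := Metric.denseRange_iff.mp hu b q hq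
  have hxD : x ∈ DD g P (useq j) q := by
    constructor
    · exact ⟨hx.1, b, hb, by rw [dist_comm] at hj; linarith⟩
    · rw [Metric.mem_closure_iff]
      intro δ hδ
      obtain ⟨y, hyP, hyd, hyb⟩ := hcon δ hδ
      refine ⟨y, ⟨hyP, ?_⟩, by rwa [dist_comm]⟩
      rintro ⟨-, b', hb', hbd'⟩
      have hthis := hyb b' hb'
      have h1 : dist b' b ≤ dist b' (useq j) + dist (useq j) b := dist_triangle _ _ _
      rw [dist_comm b' (useq j)] at h1
      rw [dist_comm (useq j) b] at h1
      linarith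
  have hxG := hx.2
  simp only [mem_iInter, mem_compl_iff] at hxG
  exact hxG j m hxD

end Baire

lemma step_ex [CompactSpace F] [CompleteSpace E] {useq : ℕ → F}
    (hP : Perfect P) (hg : ContinuousOn g {p : E × E | p.1 ≠ p.2}) (hu : DenseRange useq)
    {x : E} (hx : x ∈ GSet g P useq) {b : F} (hb : b ∈ K g P x) {ε : ℝ} (hε : 0 < ε) :
    ∃ (y z : E) (ρ : ℝ) (by' bz : F),
      y ∈ GSet g P useq ∧ z ∈ GSet g P useq ∧ by' ∈ K g P y ∧ bz ∈ K g P z ∧ 0 < ρ ∧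
      dist y x < ε ∧ dist z x < ε ∧ dist by' b < ε ∧ dist bz b < ε ∧ ρ < ε ∧
      (∀ u v : E, dist u y ≤ ρ → dist v z ≤ ρ → u ≠ v) ∧
      (∀ u v : E, dist u y ≤ ρ → dist v z ≤ ρ → dist (g (u, v)) b < ε) := by
  obtain ⟨δ1, hδ1, hstab⟩ := GSet_stable hu hx hb hε
  set δ2 : ℝ := min δ1 ε with hδ2def
  have hδ2 : 0 < δ2 := lt_min hδ1 hε
  have hclo := mem_K_iff.mp hb (δ2 / 2) (by linarith)
  obtain ⟨a, ha, hba⟩ := Metric.mem_closure_iff.mp hclo (ε / 2) (by linarith)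
  obtain ⟨⟨y0, z0⟩, ⟨hy0P, hz0P, hyz0, hy0d, hz0d⟩, rfl⟩ := ha
  have hopen : IsOpen {p : E × E | p.1 ≠ p.2} :=
    isOpen_ne_fun continuous_fst continuous_snd
  have hcont : ContinuousAt g (y0, z0) :=
    hg.continuousAt (hopen.mem_nhds (by exact hyz0))
  have hba' : dist (g (y0, z0)) b < ε / 2 := by rwa [dist_comm] at hba
  obtain ⟨η, hη, hηc⟩ := Metric.continuousAt_iff.mp hcont (ε / 2) (by linarith)
  set d0 : ℝ := dist y0 z0 with hd0def
  have hd0 : 0 < d0 := dist_pos.mpr hyz0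
  set τ : ℝ := min (min (η / 2) (d0 / 8)) (δ2 / 2) with hτdef
  have hτ : 0 < τ := by
    apply lt_min (lt_min (by linarith) (by linarith)) (by linarith)
  obtain ⟨y, hyG, hyd⟩ := GSet_dense hP.closed useq y0 hy0P τ hτ
  obtain ⟨z, hzG, hzd⟩ := GSet_dense hP.closed useq z0 hz0P τ hτ
  have hτη : τ ≤ η / 2 := le_trans (min_le_left _ _) (min_le_left _ _)
  have hτd0 : τ ≤ d0 / 8 := le_trans (min_le_left _ _) (min_le_right _ _)
  have hτδ2 : τ ≤ δ2 / 2 := min_le_right _ _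
  have hyx : dist y x < δ2 := by
    calc dist y x ≤ dist y y0 + dist y0 x := dist_triangle _ _ _
      _ < τ + δ2 / 2 := by linarith
      _ ≤ δ2 := by linarith
  have hzx : dist z x < δ2 := by
    calc dist z x ≤ dist z z0 + dist z0 x := dist_triangle _ _ _
      _ < τ + δ2 / 2 := by linarith
      _ ≤ δ2 := by linarith
  obtain ⟨by', hby', hbyd⟩ := hstab y (GSet_subset useq hyG)
    (lt_of_lt_of_le hyx (min_le_left _ _))
  obtain ⟨bz, hbz, hbzd⟩ := hstab z (GSet_subset useq hzG)
    (lt_of_lt_of_le hzx (min_le_left _ _))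
  set ρ : ℝ := min (min (η / 2) (d0 / 8)) (ε / 2) with hρdef
  have hρ : 0 < ρ := lt_min (lt_min (by linarith) (by linarith)) (by linarith)
  have hρη : ρ ≤ η / 2 := le_trans (min_le_left _ _) (min_le_left _ _)
  have hρd0 : ρ ≤ d0 / 8 := le_trans (min_le_left _ _) (min_le_right _ _)
  have hρε : ρ ≤ ε / 2 := min_le_right _ _
  have hyz : d0 / 2 ≤ dist y z := by
    have h1 : d0 ≤ dist y0 y + dist y z + dist z z0 := by
      calc d0 = dist y0 z0 := hd0def
        _ ≤ dist y0 y + dist y z0 := dist_triangle _ _ _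
        _ ≤ dist y0 y + (dist y z + dist z z0) := by
            have := dist_triangle y z z0; linarith
        _ = dist y0 y + dist y z + dist z z0 := by ring
    rw [dist_comm y0 y] at h1
    linarith
  have hneq : ∀ u v : E, dist u y ≤ ρ → dist v z ≤ ρ → u ≠ v := by
    intro u v huy hvz huv
    subst huv
    have : dist y z ≤ dist y u + dist u z := dist_triangle _ _ _
    rw [dist_comm y u] at this
    linarith
  refine ⟨y, z, ρ, by', bz, hyG, hzG, hby', hbz, hρ,
    lt_of_lt_of_le hyx (min_le_right _ _), lt_of_lt_of_le hzx (min_le_right _ _),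
    hbyd, hbzd, by linarith, hneq, ?_⟩
  intro u v huy hvz
  have hd : dist (u, v) (y0, z0) < η := by
    rw [Prod.dist_eq]
    have h1 : dist u y0 < η := by
      calc dist u y0 ≤ dist u y + dist y y0 := dist_triangle _ _ _
        _ < ρ + τ := by linarith
        _ ≤ η := by linarith
    have h2 : dist v z0 < η := by
      calc dist v z0 ≤ dist v z + dist z z0 := dist_triangle _ _ _
        _ < ρ + τ := by linarith
        _ ≤ η := by linarith
    exact max_lt h1 h2
  calc dist (g (u, v)) b ≤ dist (g (u, v)) (g (y0, z0)) + dist (g (y0, z0)) b :=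
        dist_triangle _ _ _
    _ < ε / 2 + ε / 2 := add_lt_add (hηc hd) hba'
    _ = ε := by ring

section Scheme

variable (g P) (useq : ℕ → F)

def Good (a : E × ℝ × F) : Prop :=
  a.1 ∈ GSet g P useq ∧ a.2.2 ∈ K g P a.1 ∧ 0 < a.2.1

def StepP (n : ℕ) (a c0 c1 : E × ℝ × F) : Prop :=
  Good g P useq c0 ∧ Good g P useq c1 ∧
  c0.2.1 ≤ (1/2 : ℝ)^(n+1) ∧ c1.2.1 ≤ (1/2 : ℝ)^(n+1) ∧
  closedBall c0.1 c0.2.1 ⊆ ball a.1 a.2.1 ∧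
  closedBall c1.1 c1.2.1 ⊆ ball a.1 a.2.1 ∧
  dist c0.2.2 a.2.2 ≤ (1/2 : ℝ)^n ∧ dist c1.2.2 a.2.2 ≤ (1/2 : ℝ)^n ∧
  (∀ u ∈ closedBall c0.1 c0.2.1, ∀ v ∈ closedBall c1.1 c1.2.1, u ≠ v) ∧
  (∀ u ∈ closedBall c0.1 c0.2.1, ∀ v ∈ closedBall c1.1 c1.2.1,
    dist (g (u, v)) a.2.2 ≤ (1/2 : ℝ)^n)

variable {g P useq}

lemma step_total [CompactSpace F] [CompleteSpace E]
    (hP : Perfect P) (hg : ContinuousOn g {p : E × E | p.1 ≠ p.2}) (hu : DenseRange useq)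
    (n : ℕ) (a : E × ℝ × F) (ha : Good g P useq a) :
    ∃ c : (E × ℝ × F) × (E × ℝ × F), StepP g P useq n a c.1 c.2 := by
  obtain ⟨hx, hb, hr⟩ := ha
  set ε₀ : ℝ := min (a.2.1 / 2) ((1/2 : ℝ)^(n+1)) with hε₀def
  have hpos : (0:ℝ) < (1/2 : ℝ)^(n+1) := by positivity
  have hε₀ : 0 < ε₀ := lt_min (by linarith) hpos
  obtain ⟨y, z, ρ, by', bz, hyG, hzG, hby, hbz, hρ, hyx, hzx, hbyd, hbzd, hρε, hneq, hcross⟩ :=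
    step_ex hP hg hu hx hb hε₀
  set ρ' : ℝ := min ρ ε₀ with hρ'def
  have hρ' : 0 < ρ' := lt_min hρ hε₀
  have hρ'ρ : ρ' ≤ ρ := min_le_left _ _
  have hρ'ε : ρ' ≤ ε₀ := min_le_right _ _
  have hε₀r : ε₀ ≤ a.2.1 / 2 := min_le_left _ _
  have hε₀n : ε₀ ≤ (1/2 : ℝ)^(n+1) := min_le_right _ _
  have hpow : (1/2 : ℝ)^(n+1) ≤ (1/2 : ℝ)^n := by
    apply pow_le_pow_of_le_one <;> norm_num
  have hsub : ∀ w : E, dist w a.1 < ε₀ → closedBall w ρ' ⊆ ball a.1 a.2.1 := by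
    intro w hw u hu
    rw [mem_closedBall] at hu
    rw [mem_ball]
    calc dist u a.1 ≤ dist u w + dist w a.1 := dist_triangle _ _ _
      _ < ρ' + ε₀ := by linarith
      _ ≤ ε₀ + ε₀ := by linarith
      _ ≤ a.2.1 := by linarith
  refine ⟨((y, ρ', by'), (z, ρ', bz)), ⟨hyG, hby, hρ'⟩, ⟨hzG, hbz, hρ'⟩,
    le_trans hρ'ε hε₀n, le_trans hρ'ε hε₀n, hsub y hyx, hsub z hzx,
    le_trans (le_of_lt hbyd) (le_trans hε₀n hpow),
    le_trans (le_of_lt hbzd) (le_trans hε₀n hpow), ?_, ?_⟩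
  · intro u hu v hv
    exact hneq u v (le_trans (mem_closedBall.mp hu) hρ'ρ)
      (le_trans (mem_closedBall.mp hv) hρ'ρ)
  · intro u hu v hv
    exact le_trans (le_of_lt (hcross u v (le_trans (mem_closedBall.mp hu) hρ'ρ)
      (le_trans (mem_closedBall.mp hv) hρ'ρ))) (le_trans hε₀n hpow)

variable [CompactSpace F] [CompleteSpace E]

noncomputable def st (hP : Perfect P) (hg : ContinuousOn g {p : E × E | p.1 ≠ p.2})
    (hu : DenseRange useq) (n : ℕ) (a : E × ℝ × F) : (E × ℝ × F) × (E × ℝ × F) :=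
  if h : Good g P useq a then (step_total hP hg hu n a h).choose else (a, a)

lemma st_spec (hP : Perfect P) (hg : ContinuousOn g {p : E × E | p.1 ≠ p.2})
    (hu : DenseRange useq) {n : ℕ} {a : E × ℝ × F} (h : Good g P useq a) :
    StepP g P useq n a (st hP hg hu n a).1 (st hP hg hu n a).2 := by
  rw [st, dif_pos h]
  exact (step_total hP hg hu n a h).choose_spec

noncomputable def tr (hP : Perfect P) (hg : ContinuousOn g {p : E × E | p.1 ≠ p.2})
    (hu : DenseRange useq) (root : E × ℝ × F) : List Bool → E × ℝ × F
  | [] => root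
  | i :: s => cond i (st hP hg hu s.length (tr hP hg hu root s)).2
      (st hP hg hu s.length (tr hP hg hu root s)).1

variable (hP : Perfect P) (hg : ContinuousOn g {p : E × E | p.1 ≠ p.2})
  (hu : DenseRange useq) (root : E × ℝ × F)

lemma tr_good (hroot : Good g P useq root) :
    ∀ s : List Bool, Good g P useq (tr hP hg hu root s) := by
  intro s
  induction s with
  | nil => exact hroot
  | cons i s ih =>
    have := st_spec hP hg hu (n := s.length) ih
    cases i
    · exact this.1
    · exact this.2.1

lemma tr_rel (hroot : Good g P useq root) (s : List Bool) :
    StepP g P useq s.length (tr hP hg hu root s)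
      (tr hP hg hu root (false :: s)) (tr hP hg hu root (true :: s)) := by
  have := st_spec hP hg hu (n := s.length) (tr_good hP hg hu root hroot s)
  exact this

lemma tr_rad (hroot : Good g P useq root) (hrad : root.2.1 ≤ 1) :
    ∀ s : List Bool, (tr hP hg hu root s).2.1 ≤ (1/2 : ℝ)^s.length := by
  intro s
  cases s with
  | nil => simpa [tr] using hrad
  | cons i s =>
    have h := tr_rel hP hg hu root hroot s
    cases i
    · exact h.2.2.1
    · exact h.2.2.2.1

end Scheme

def idx (ω : ℕ → Bool) : ℕ → List Bool
  | 0 => []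
  | n + 1 => ω n :: idx ω n

lemma idx_length (ω : ℕ → Bool) : ∀ n, (idx ω n).length = n := by
  intro n
  induction n with
  | zero => rfl
  | succ n ih => simp [idx, ih]

lemma idx_congr {ω ω' : ℕ → Bool} : ∀ n, (∀ i < n, ω i = ω' i) → idx ω n = idx ω' n := by
  intro n
  induction n with
  | zero => intro _; rfl
  | succ n ih =>
    intro h
    simp only [idx]
    rw [h n (Nat.lt_succ_self n), ih (fun i hi => h i (Nat.lt_succ_of_lt hi))]


theorem main {E : Type*} [MetricSpace E] [CompleteSpace E] [SecondCountableTopology E]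
    (hE : ¬ (Set.univ : Set E).Countable)
    {F : Type*} [MetricSpace F] [CompactSpace F]
    (g : E × E → F)
    (hg : ContinuousOn g {p : E × E | p.1 ≠ p.2})
    (hsymm : ∀ x y : E, x ≠ y → g (x, y) = g (y, x)) :
    ∃ Q : Set E, Q.Nonempty ∧ IsCompact Q ∧ Perfect Q ∧
      Nonempty (Q ≃ₜ (ℕ → Bool)) ∧
      ∃ ghat : E × E → F, ContinuousOn ghat (Q ×ˢ Q) ∧
        ∀ x ∈ Q, ∀ y ∈ Q, x ≠ y → ghat (x, y) = g (x, y) := by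
  obtain ⟨P, hP, hPne, -⟩ :=
    exists_perfect_nonempty_of_isClosed_of_not_countable isClosed_univ hE
  obtain ⟨x', hx'⟩ := hPne
  obtain ⟨pr, -⟩ := pairSet_nonempty hP hx' one_pos
  haveI : Nonempty F := ⟨g pr⟩
  obtain ⟨useq, hu⟩ := TopologicalSpace.exists_dense_seq F
  obtain ⟨x0, hx0G, -⟩ := GSet_dense (g := g) hP.closed useq x' hx' 1 one_pos
  obtain ⟨b0, hb0⟩ := K_nonempty (g := g) hP (GSet_subset useq hx0G)
  have hroot : Good g P useq (x0, (1:ℝ), b0) := ⟨hx0G, hb0, one_pos⟩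
  set T : List Bool → E × ℝ × F := tr hP hg hu (x0, (1:ℝ), b0) with hTdef
  have hGood : ∀ s, Good g P useq (T s) := tr_good hP hg hu _ hroot
  have hRel : ∀ s, StepP g P useq s.length (T s) (T (false :: s)) (T (true :: s)) :=
    tr_rel hP hg hu _ hroot
  have hRad : ∀ s, (T s).2.1 ≤ (1/2:ℝ)^s.length := tr_rad hP hg hu _ hroot (le_refl 1)
  have hRadPos : ∀ s, 0 < (T s).2.1 := fun s => (hGood s).2.2
  have hidxsucc : ∀ (ω : ℕ → Bool) (n : ℕ), idx ω (n+1) = ω n :: idx ω n := fun ω n => rfl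
  -- cell monotonicity
  have hmono : ∀ (i : Bool) (s : List Bool),
      closedBall (T (i :: s)).1 (T (i :: s)).2.1 ⊆ closedBall (T s).1 (T s).2.1 := by
    intro i s
    have h := hRel s
    cases i
    · exact (h.2.2.2.2.1).trans ball_subset_closedBall
    · exact (h.2.2.2.2.2.1).trans ball_subset_closedBall
  have hchain : ∀ (ω : ℕ → Bool) (n m : ℕ), n ≤ m →
      closedBall (T (idx ω m)).1 (T (idx ω m)).2.1 ⊆
        closedBall (T (idx ω n)).1 (T (idx ω n)).2.1 := by
    intro ω n m hnm
    induction m, hnm using Nat.le_induction with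
    | base => exact subset_rfl
    | succ m hnm ih =>
      refine subset_trans ?_ ih
      rw [hidxsucc]
      exact hmono (ω m) (idx ω m)
  have hcenter : ∀ s, (T s).1 ∈ closedBall (T s).1 (T s).2.1 :=
    fun s => mem_closedBall_self (le_of_lt (hRadPos s))
  have hradix : ∀ (ω : ℕ → Bool) (n : ℕ), (T (idx ω n)).2.1 ≤ (1/2:ℝ)^n := by
    intro ω n
    have := hRad (idx ω n)
    rwa [idx_length] at this
  have hcdist : ∀ (ω : ℕ → Bool) (n : ℕ),
      dist ((T (idx ω (n+1))).1) ((T (idx ω n)).1) ≤ (1/2:ℝ)^n := by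
    intro ω n
    have h1 : (T (idx ω (n+1))).1 ∈ closedBall (T (idx ω n)).1 (T (idx ω n)).2.1 := by
      rw [hidxsucc]
      exact hmono (ω n) (idx ω n) (by rw [← hidxsucc]; exact hcenter (idx ω (n+1)))
    exact le_trans (mem_closedBall.mp h1) (hradix ω n)
  have hφex : ∀ ω : ℕ → Bool, ∃ x : E, Tendsto (fun n => (T (idx ω n)).1) atTop (𝓝 x) := by
    intro ω
    apply cauchySeq_tendsto_of_complete
    apply cauchySeq_of_le_geometric (1/2 : ℝ) 1 (by norm_num)
    intro n
    rw [dist_comm, one_mul]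
    exact hcdist ω n
  choose φ hφ using hφex
  have hφcell : ∀ (ω : ℕ → Bool) (n : ℕ),
      φ ω ∈ closedBall (T (idx ω n)).1 (T (idx ω n)).2.1 := by
    intro ω n
    apply isClosed_closedBall.mem_of_tendsto (hφ ω)
    rw [eventually_atTop]
    exact ⟨n, fun m hm => hchain ω n m hm (hcenter (idx ω m))⟩
  have hφdist : ∀ (ω : ℕ → Bool) (n : ℕ), dist (φ ω) ((T (idx ω n)).1) ≤ (1/2:ℝ)^n :=
    fun ω n => le_trans (mem_closedBall.mp (hφcell ω n)) (hradix ω n)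
  -- value sequence
  have hvdist : ∀ (ω : ℕ → Bool) (n : ℕ),
      dist ((T (idx ω (n+1))).2.2) ((T (idx ω n)).2.2) ≤ (1/2:ℝ)^n := by
    intro ω n
    have h := hRel (idx ω n)
    have hl : (idx ω n).length = n := idx_length ω n
    rw [hidxsucc]
    cases hωn : ω n
    · rw [hωn] at *
      have := h.2.2.2.2.2.2.1
      rwa [hl] at this
    · rw [hωn] at *
      have := h.2.2.2.2.2.2.2.1
      rwa [hl] at this
  have hvchain : ∀ (ω : ℕ → Bool) (n m : ℕ), n ≤ m →
      dist ((T (idx ω m)).2.2) ((T (idx ω n)).2.2) ≤ 2 * (1/2:ℝ)^n := by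
    intro ω n m hnm
    have key : dist ((T (idx ω m)).2.2) ((T (idx ω n)).2.2)
        ≤ 2 * (1/2:ℝ)^n - 2 * (1/2:ℝ)^m := by
      induction m, hnm using Nat.le_induction with
      | base => simp
      | succ m hnm ih =>
        have h1 := hvdist ω m
        have h2 : dist ((T (idx ω (m+1))).2.2) ((T (idx ω n)).2.2)
            ≤ dist ((T (idx ω (m+1))).2.2) ((T (idx ω m)).2.2)
              + dist ((T (idx ω m)).2.2) ((T (idx ω n)).2.2) := dist_triangle _ _ _
        have h3 : (1/2:ℝ)^(m+1) = (1/2:ℝ)^m * (1/2) := pow_succ _ _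
        linarith
    have hpos : (0:ℝ) ≤ 2 * (1/2:ℝ)^m := by positivity
    linarith
  have hvex : ∀ ω : ℕ → Bool, ∃ b : F, Tendsto (fun n => (T (idx ω n)).2.2) atTop (𝓝 b) := by
    intro ω
    apply cauchySeq_tendsto_of_complete
    apply cauchySeq_of_le_geometric (1/2 : ℝ) 1 (by norm_num)
    intro n
    rw [dist_comm, one_mul]
    exact hvdist ω n
  choose hfn hhfn using hvex
  have hhv : ∀ (ω : ℕ → Bool) (n : ℕ), dist (hfn ω) ((T (idx ω n)).2.2) ≤ 2 * (1/2:ℝ)^n := by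
    intro ω n
    apply le_of_tendsto ((hhfn ω).dist tendsto_const_nhds)
    rw [eventually_atTop]
    exact ⟨n, fun m hm => hvchain ω n m hm⟩
  -- cylinders
  have hcyl : ∀ (ω : ℕ → Bool) (n : ℕ), ∀ᶠ ω' in 𝓝 ω, ∀ i < n, ω' i = ω i := by
    intro ω n
    have h1 : ∀ i : Fin n, ∀ᶠ ω' in 𝓝 ω, ω' i = ω i := by
      intro i
      have hop : IsOpen ((fun ω' : ℕ → Bool => ω' i.1) ⁻¹' {ω i.1}) :=
        IsOpen.preimage (continuous_apply (i : ℕ)) (isOpen_discrete _)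
      exact hop.mem_nhds rfl
    have h2 := Filter.eventually_all.mpr h1
    filter_upwards [h2] with ω' h i hi
    exact h ⟨i, hi⟩
  have hφcont : Continuous φ := by
    rw [continuous_iff_continuousAt]
    intro ω
    rw [ContinuousAt, Metric.tendsto_nhds]
    intro ε hε
    obtain ⟨n, hn⟩ := exists_pow_lt_of_lt_one (show (0:ℝ) < ε/2 by linarith)
      (by norm_num : (1/2:ℝ) < 1)
    filter_upwards [hcyl ω n] with ω' h
    have he : idx ω' n = idx ω n := idx_congr n h
    have h1 := hφdist ω' n
    have h2 := hφdist ω n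
    rw [he] at h1
    calc dist (φ ω') (φ ω)
        ≤ dist (φ ω') ((T (idx ω n)).1) + dist (φ ω) ((T (idx ω n)).1) :=
          dist_triangle_right _ _ _
      _ ≤ (1/2:ℝ)^n + (1/2:ℝ)^n := add_le_add h1 h2
      _ < ε := by linarith
  -- the splitting lemma
  have hdiff : ∀ α β : ℕ → Bool, α ≠ β → ∃ m, (∀ i < m, α i = β i) ∧ α m ≠ β m ∧
      φ α ≠ φ β ∧ dist (g (φ α, φ β)) ((T (idx α m)).2.2) ≤ (1/2:ℝ)^m := by
    intro α β hab
    have hex : ∃ m, α m ≠ β m := by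
      by_contra h; push_neg at h; exact hab (funext h)
    refine ⟨Nat.find hex, fun i hi => not_not.mp (Nat.find_min hex hi), Nat.find_spec hex, ?_, ?_⟩
      <;> {
      set m := Nat.find hex with hmdef
      have hdm : α m ≠ β m := Nat.find_spec hex
      have hagree : ∀ i < m, α i = β i := fun i hi => not_not.mp (Nat.find_min hex hi)
      have hidx : idx β m = idx α m := idx_congr m (fun i hi => (hagree i hi).symm)
      have hφα := hφcell α (m+1)
      have hφβ := hφcell β (m+1)
      rw [hidxsucc] at hφα hφβ
      rw [hidx] at hφβ
      have h := hRel (idx α m)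
      have hl : (idx α m).length = m := idx_length α m
      have hneqP := h.2.2.2.2.2.2.2.2.1
      have hcrossP := h.2.2.2.2.2.2.2.2.2
      rw [hl] at hcrossP
      first
      | { -- neq goal
          cases hαm : α m with
          | false =>
            have hβm : β m = true := by
              cases hβ : β m
              · rw [hαm, hβ] at hdm; exact absurd rfl hdm
              · rfl
            rw [hαm] at hφα; rw [hβm] at hφβ
            exact hneqP _ hφα _ hφβ
          | true =>
            have hβm : β m = false := by
              cases hβ : β m
              · rfl
              · rw [hαm, hβ] at hdm; exact absurd rfl hdm
            rw [hαm] at hφα; rw [hβm] at hφβ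
            exact (hneqP _ hφβ _ hφα).symm }
      | { -- cross goal
          cases hαm : α m with
          | false =>
            have hβm : β m = true := by
              cases hβ : β m
              · rw [hαm, hβ] at hdm; exact absurd rfl hdm
              · rfl
            rw [hαm] at hφα; rw [hβm] at hφβ
            exact hcrossP _ hφα _ hφβ
          | true =>
            have hβm : β m = false := by
              cases hβ : β m
              · rfl
              · rw [hαm, hβ] at hdm; exact absurd rfl hdm
            rw [hαm] at hφα; rw [hβm] at hφβ
            have hne := hneqP _ hφβ _ hφα
            rw [hsymm (φ α) (φ β) hne.symm]
            exact hcrossP _ hφβ _ hφα } }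
  have hinj : Function.Injective φ := by
    intro α β h
    by_contra hab
    obtain ⟨m, -, -, hne, -⟩ := hdiff α β hab
    exact hne h
  -- the Cantor set
  refine ⟨Set.range φ, range_nonempty φ, isCompact_range hφcont, ?_, ?_, ?_⟩
  · -- Perfect
    refine ⟨(isCompact_range hφcont).isClosed, ?_⟩
    intro x hx
    obtain ⟨ω, rfl⟩ := hx
    rw [accPt_iff_nhds]
    intro U hU
    obtain ⟨ε, hε, hball⟩ := Metric.mem_nhds_iff.mp hU
    obtain ⟨n, hn⟩ := exists_pow_lt_of_lt_one (show (0:ℝ) < ε/2 by linarith)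
      (by norm_num : (1/2:ℝ) < 1)
    set ω' : ℕ → Bool := fun i => if i = n then !(ω i) else ω i with hω'def
    have hagree : ∀ i < n, ω' i = ω i := by
      intro i hi
      simp only [hω'def]
      rw [if_neg (Nat.ne_of_lt hi)]
    have hne : ω' ≠ ω := by
      intro h
      have := congrFun h n
      simp only [hω'def, if_pos rfl] at this
      exact (Bool.not_ne_self (ω n)) this
    have hdist : dist (φ ω') (φ ω) < ε := by
      have he : idx ω' n = idx ω n := idx_congr n hagree
      have h1 := hφdist ω' n
      rw [he] at h1
      calc dist (φ ω') (φ ω)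
          ≤ dist (φ ω') ((T (idx ω n)).1) + dist (φ ω) ((T (idx ω n)).1) :=
            dist_triangle_right _ _ _
        _ ≤ (1/2:ℝ)^n + (1/2:ℝ)^n := add_le_add h1 (hφdist ω n)
        _ < ε := by linarith
    exact ⟨φ ω', ⟨hball (mem_ball.mpr hdist), mem_range_self ω'⟩,
      fun h => hne (hinj h)⟩
  · -- homeomorphism
    have hfb : Function.Bijective
        (fun ω => (⟨φ ω, mem_range_self ω⟩ : Set.range φ)) := by
      constructor
      · intro a b h
        exact hinj (congrArg Subtype.val h)
      · rintro ⟨y, α, rfl⟩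
        exact ⟨α, rfl⟩
    have hfc : Continuous (fun ω => (⟨φ ω, mem_range_self ω⟩ : Set.range φ)) :=
      hφcont.subtype_mk _
    exact ⟨(Continuous.homeoOfEquivCompactToT2 (f := Equiv.ofBijective _ hfb) hfc).symm⟩
  · -- extension
    set H : E → F := fun x => if hx : ∃ ω', φ ω' = x then hfn hx.choose
      else hfn (fun _ => false) with hHdef
    have hHφ : ∀ ω', H (φ ω') = hfn ω' := by
      intro ω'
      have hex : ∃ ω'', φ ω'' = φ ω' := ⟨ω', rfl⟩
      simp only [hHdef, dif_pos hex]
      congr 1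
      exact hinj hex.choose_spec
    set ghat : E × E → F := fun q => if q.1 = q.2 then H q.1 else g q with hghatdef
    have hgoff : ∀ q : E × E, q.1 ≠ q.2 → ghat q = g q := by
      intro q h
      simp only [hghatdef, if_neg h]
    have hgdiag : ∀ x : E, ghat (x, x) = H x := by
      intro x
      simp only [hghatdef, if_pos rfl]
    refine ⟨ghat, ?_, fun x _ y _ hxy => hgoff (x, y) hxy⟩
    intro p hp
    rw [mem_prod] at hp
    by_cases hpe : p.1 = p.2
    · -- diagonal
      obtain ⟨ω, hω⟩ := hp.1
      have hpeq : p = (φ ω, φ ω) := by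
        rw [Prod.ext_iff]
        exact ⟨hω.symm, by rw [← hpe, hω]⟩
      rw [hpeq]
      rw [Metric.continuousWithinAt_iff]
      intro ε hε
      obtain ⟨n, hn⟩ := exists_pow_lt_of_lt_one (show (0:ℝ) < ε/8 by linarith)
        (by norm_num : (1/2:ℝ) < 1)
      have hcylcl : IsClosed {α : ℕ → Bool | ¬ ∀ i < n, α i = ω i} := by
        have hop : IsOpen {α : ℕ → Bool | ∀ i < n, α i = ω i} := by
          have : {α : ℕ → Bool | ∀ i < n, α i = ω i}
              = ⋂ i ∈ Finset.range n, ((fun α : ℕ → Bool => α i) ⁻¹' {ω i}) := by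
            ext α; simp [Finset.mem_range]
          rw [this]
          exact isOpen_biInter_finset fun i _ =>
            IsOpen.preimage (continuous_apply i) (isOpen_discrete _)
        exact IsOpen.isClosed_compl hop
      have hBcomp : IsCompact (φ '' {α | ¬ ∀ i < n, α i = ω i}) :=
        (hcylcl.isCompact).image hφcont
      have hxnot : φ ω ∉ φ '' {α | ¬ ∀ i < n, α i = ω i} := by
        rintro ⟨α, hα, hEq⟩
        have := hinj hEq
        subst this
        exact hα fun i _ => rfl
      obtain ⟨δ, hδ, hballB⟩ :=
        Metric.isOpen_iff.mp hBcomp.isClosed.isOpen_compl (φ ω) hxnot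
      refine ⟨δ, hδ, ?_⟩
      rintro ⟨u, v⟩ hmem hdist
      rw [mem_prod] at hmem
      obtain ⟨α, rfl⟩ := hmem.1
      obtain ⟨β, rfl⟩ := hmem.2
      rw [Prod.dist_eq] at hdist
      have hd1 : dist (φ α) (φ ω) < δ := lt_of_le_of_lt (le_max_left _ _) hdist
      have hd2 : dist (φ β) (φ ω) < δ := lt_of_le_of_lt (le_max_right _ _) hdist
      have hαcyl : ∀ i < n, α i = ω i := by
        by_contra h
        exact (hballB (mem_ball.mpr hd1)) ⟨α, h, rfl⟩
      have hβcyl : ∀ i < n, β i = ω i := by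
        by_contra h
        exact (hballB (mem_ball.mpr hd2)) ⟨β, h, rfl⟩
      have hidxα : idx α n = idx ω n := idx_congr n hαcyl
      have hidxβ : idx β n = idx ω n := idx_congr n hβcyl
      have hgx : ghat (φ ω, φ ω) = hfn ω := by rw [hgdiag, hHφ]
      have hhα : dist (hfn α) (hfn ω) ≤ 4 * (1/2:ℝ)^n := by
        have h1 := hhv α n
        have h2 := hhv ω n
        rw [hidxα] at h1
        calc dist (hfn α) (hfn ω)
            ≤ dist (hfn α) ((T (idx ω n)).2.2) + dist (hfn ω) ((T (idx ω n)).2.2) :=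
              dist_triangle_right _ _ _
          _ ≤ 2 * (1/2:ℝ)^n + 2 * (1/2:ℝ)^n := add_le_add h1 h2
          _ = 4 * (1/2:ℝ)^n := by ring
      by_cases huv : φ α = φ β
      · have hgp : ghat (φ α, φ β) = hfn α := by
          have : ghat (φ α, φ β) = H (φ α) := by
            simp only [hghatdef, if_pos huv]
          rw [this, hHφ]
        rw [hgp, hgx]
        calc dist (hfn α) (hfn ω) ≤ 4 * (1/2:ℝ)^n := hhα
          _ < ε := by linarith
      · have hαβ : α ≠ β := fun h => huv (congrArg φ h)
        obtain ⟨m, hag, hdm, -, hcross⟩ := hdiff α β hαβ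
        have hnm : n ≤ m := by
          by_contra h
          push_neg at h
          exact hdm ((hαcyl m h).trans (hβcyl m h).symm)
        have hpowmn : (1/2:ℝ)^m ≤ (1/2:ℝ)^n :=
          pow_le_pow_of_le_one (by norm_num) (by norm_num) hnm
        have hval1 : dist ((T (idx α m)).2.2) ((T (idx α n)).2.2) ≤ 2 * (1/2:ℝ)^n :=
          hvchain α n m hnm
        have hval2 : dist (hfn ω) ((T (idx ω n)).2.2) ≤ 2 * (1/2:ℝ)^n := hhv ω n
        rw [hgoff (φ α, φ β) huv, hgx]
        calc dist (g (φ α, φ β)) (hfn ω)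
            ≤ dist (g (φ α, φ β)) ((T (idx α m)).2.2)
              + dist ((T (idx α m)).2.2) ((T (idx α n)).2.2)
              + dist ((T (idx α n)).2.2) (hfn ω) := dist_triangle4 _ _ _ _
          _ ≤ (1/2:ℝ)^m + 2 * (1/2:ℝ)^n + 2 * (1/2:ℝ)^n := by
              refine add_le_add (add_le_add hcross hval1) ?_
              rw [hidxα, dist_comm]
              exact hval2
          _ ≤ 5 * (1/2:ℝ)^n := by linarith
          _ < ε := by linarith
    · -- off-diagonal
      apply ContinuousAt.continuousWithinAt
      have hopen : IsOpen {q : E × E | q.1 ≠ q.2} :=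
        isOpen_ne_fun continuous_fst continuous_snd
      have hev : g =ᶠ[𝓝 p] ghat := by
        filter_upwards [hopen.mem_nhds hpe] with q hq
        exact (hgoff q hq).symm
      exact ContinuousAt.congr (hg.continuousAt (hopen.mem_nhds hpe)) hev


end Stmt8Aux

theorem stmt_8 (E : Type*) [TopologicalSpace E] [PolishSpace E]
    (hE : ¬ (Set.univ : Set E).Countable)
    (F : Type*) [MetricSpace F] [CompactSpace F]
    (g : E × E → F)
    (hg : ContinuousOn g {p : E × E | p.1 ≠ p.2})
    (hsymm : ∀ x y : E, x ≠ y → g (x, y) = g (y, x)) :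
    ∃ Q : Set E, Q.Nonempty ∧ IsCompact Q ∧ Perfect Q ∧
      Nonempty (Q ≃ₜ (ℕ → Bool)) ∧
      ∃ ghat : E × E → F, ContinuousOn ghat (Q ×ˢ Q) ∧
        ∀ x ∈ Q, ∀ y ∈ Q, x ≠ y → ghat (x, y) = g (x, y) := by
  letI := TopologicalSpace.upgradeIsCompletelyMetrizable E
  exact Stmt8Aux.main hE g hg hsymm
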